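/- arXiv:1706.03310 — 5 statements merged into one kernel-verified Lean document; each statement's English description precedes it below -/
import Mathlib

section
/- In a finite-horizon Markov decision model with finite state space, the value function produced by the Bellman backward recursion equals the optimal value: for every initial state x₀ ∈ E, v*₀(x₀) = max over all policies π of the policy value v₀^π(x₀). -/
/-!
Finite-horizon Markov decision model. `policyVal K r rT π n t x` is the expected total
reward collected from time `t` on, with `n` remaining steps (so `n = T - t`), starting at
state `x` and following policy `π`; it is given by the standard backward recursion, which
equals the expectation of cumulated rewards over the controlled Markov chain.
`bellmanVal` is the Bellman backward recursion.
-/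

/-- Policy value via the backward recursion (first argument: remaining steps,
second argument: current time). -/
noncomputable def policyVal {E A : Type*} [Fintype E]
    (K : ℕ → A → E → E → ℝ) (r : ℕ → E → A → ℝ) (rT : E → ℝ)
    (π : ℕ → E → A) : ℕ → ℕ → E → ℝ
  | 0, _ => rT
  | n + 1, t => fun x =>
      r t x (π t x) + ∑ x' : E, K t (π t x) x x' * policyVal K r rT π n (t + 1) x'

/-- Bellman backward recursion (first argument: remaining steps, second: current time). -/
noncomputable def bellmanVal {E A : Type*} [Fintype E] [Fintype A] [Nonempty A]
    (K : ℕ → A → E → E → ℝ) (r : ℕ → E → A → ℝ) (rT : E → ℝ) : ℕ → ℕ → E → ℝ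
  | 0, _ => rT
  | n + 1, t => fun x =>
      ⨆ a : A, (r t x a + ∑ x' : E, K t a x x' * bellmanVal K r rT n (t + 1) x')

/-- In a finite-horizon Markov decision model with finite state space, the value function
produced by the Bellman backward recursion equals the optimal value: for every initial
state `x₀`, `v*₀(x₀)` is the maximum over all policies `π` of the policy value `v₀^π(x₀)`. -/
theorem bellmanVal_eq_max_policyVal {E A : Type*} [Fintype E] [Fintype A] [Nonempty A]
    (T : ℕ) (K : ℕ → A → E → E → ℝ)
    (hK0 : ∀ t a x x', 0 ≤ K t a x x')
    (hK1 : ∀ t a x, ∑ x' : E, K t a x x' = 1)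
    (r : ℕ → E → A → ℝ) (rT : E → ℝ) (x₀ : E) :
    IsGreatest {y : ℝ | ∃ π : ℕ → E → A, y = policyVal K r rT π T 0 x₀}
      (bellmanVal K r rT T 0 x₀) := by
  constructor
  · -- membership: exhibit optimal policy
    classical
    set π : ℕ → E → A := fun t x =>
      Classical.choose (Finite.exists_max
        (fun a : A => r t x a + ∑ x' : E, K t a x x' * bellmanVal K r rT (T - (t + 1)) (t + 1) x'))
      with hπ
    refine ⟨π, ?_⟩
    suffices h : ∀ n t, n + t = T → ∀ x, policyVal K r rT π n t x = bellmanVal K r rT n t x by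
      exact (h T 0 (by omega) x₀).symm
    intro n
    induction n with
    | zero => intro t _ x; rfl
    | succ m ih =>
      intro t ht x
      have hT : T - (t + 1) = m := by omega
      have hspec := Classical.choose_spec (Finite.exists_max
        (fun a : A => r t x a + ∑ x' : E, K t a x x' * bellmanVal K r rT (T - (t + 1)) (t + 1) x'))
      have hsum : policyVal K r rT π (m + 1) t x
          = r t x (π t x) + ∑ x' : E, K t (π t x) x x' * bellmanVal K r rT m (t + 1) x' := by
        show r t x (π t x) + ∑ x' : E, K t (π t x) x x' * policyVal K r rT π m (t + 1) x' = _
        congr 1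
        refine Finset.sum_congr rfl fun x' _ => ?_
        rw [ih (t + 1) (by omega) x']
      rw [hsum]
      show _ = ⨆ a : A, (r t x a + ∑ x' : E, K t a x x' * bellmanVal K r rT m (t + 1) x')
      rw [← hT]
      refine le_antisymm (le_ciSup (f := fun a : A =>
        r t x a + ∑ x' : E, K t a x x' * bellmanVal K r rT (T - (t + 1)) (t + 1) x')
        (Set.Finite.bddAbove (Set.finite_range _)) (π t x)) ?_
      exact ciSup_le fun a => hspec a
  · -- upper bound
    rintro y ⟨π, rfl⟩
    suffices h : ∀ n t x, policyVal K r rT π n t x ≤ bellmanVal K r rT n t x from h T 0 x₀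
    intro n
    induction n with
    | zero => intro t x; exact le_rfl
    | succ m ih =>
      intro t x
      have h1 : policyVal K r rT π (m + 1) t x
          ≤ r t x (π t x) + ∑ x' : E, K t (π t x) x x' * bellmanVal K r rT m (t + 1) x' := by
        show r t x (π t x) + ∑ x' : E, K t (π t x) x x' * policyVal K r rT π m (t + 1) x' ≤ _
        refine add_le_add le_rfl (Finset.sum_le_sum fun x' _ => ?_)
        exact mul_le_mul_of_nonneg_left (ih (t + 1) x') (hK0 t (π t x) x x')
      refine h1.trans ?_
      show _ ≤ ⨆ a : A, (r t x a + ∑ x' : E, K t a x x' * bellmanVal K r rT m (t + 1) x')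
      exact le_ciSup (f := fun a : A =>
        r t x a + ∑ x' : E, K t a x x' * bellmanVal K r rT m (t + 1) x')
        (Set.Finite.bddAbove (Set.finite_range _)) (π t x)
end

section
/- In a finite-horizon Markov decision model with finite state space, any greedy policy with respect to the Bellman value functions is optimal: if π*_t(x) attains the maximum in max_{a∈A} ( r_t(x,a) + Σ_{x'∈E} K_t^a(x,x') v*_{t+1}(x') ) for every t < T and x ∈ E, then the policy value of π* satisfies v₀^{π*}(x₀) = v*₀(x₀) for every initial state x₀ ∈ E. -/
/-- Any greedy policy with respect to the Bellman value functions is optimal: if for every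
`t < T` and every state `x` the action `π* t x` attains the maximum in the Bellman recursion
(i.e. its one-step value equals `v*ₜ(x)`), then the value of the policy `π*` coincides with the
Bellman value function at time `0`, for every initial state `x₀`. -/
theorem greedy_policy_optimal {E A : Type*} [Fintype E] [Fintype A] [Nonempty A]
    (T : ℕ) (K : ℕ → A → E → E → ℝ)
    (hK0 : ∀ t a x x', 0 ≤ K t a x x')
    (hK1 : ∀ t a x, ∑ x' : E, K t a x x' = 1)
    (r : ℕ → E → A → ℝ) (rT : E → ℝ)
    (πs : ℕ → E → A)
    (hgreedy : ∀ t, t < T → ∀ x : E,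
      r t x (πs t x) +
          ∑ x' : E, K t (πs t x) x x' * bellmanVal K r rT (T - (t + 1)) (t + 1) x' =
        bellmanVal K r rT (T - t) t x) :
    ∀ x₀ : E, policyVal K r rT πs T 0 x₀ = bellmanVal K r rT T 0 x₀ := by
  have key : ∀ n t, t + n = T → ∀ x : E,
      policyVal K r rT πs n t x = bellmanVal K r rT n t x := by
    intro n
    induction n with
    | zero => intro t _ x; rfl
    | succ n ih =>
      intro t ht x
      have htT : t < T := by omega
      have h1 : T - t = n + 1 := by omega
      have h2 : T - (t + 1) = n := by omega
      have hg := hgreedy t htT x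
      rw [h1, h2] at hg
      rw [policyVal, ← hg]
      simp only
      congr 1
      apply Finset.sum_congr rfl
      intro x' _
      rw [ih (t + 1) (by omega) x']
  intro x₀
  exact key T 0 (by omega) x₀
end

section
/- Verification inequality: in a finite-horizon Markov decision model with finite state space, for every policy π and every initial state x₀ ∈ E, the policy value is dominated by the Bellman value function: v₀^π(x₀) ≤ v*₀(x₀). -/
/-- Verification inequality: for every policy `π` and every initial state `x₀`, the policy value
is dominated by the Bellman value function: `v₀^π(x₀) ≤ v*₀(x₀)`. -/
theorem policyVal_le_bellmanVal {E A : Type*} [Fintype E] [Fintype A] [Nonempty A]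
    (T : ℕ) (K : ℕ → A → E → E → ℝ)
    (hK0 : ∀ t a x x', 0 ≤ K t a x x')
    (hK1 : ∀ t a x, ∑ x' : E, K t a x x' = 1)
    (r : ℕ → E → A → ℝ) (rT : E → ℝ)
    (π : ℕ → E → A) (x₀ : E) :
    policyVal K r rT π T 0 x₀ ≤ bellmanVal K r rT T 0 x₀ := by
  suffices h : ∀ n t x, policyVal K r rT π n t x ≤ bellmanVal K r rT n t x from h T 0 x₀
  intro n
  induction n with
  | zero => intro t x; simp [policyVal, bellmanVal]
  | succ n ih =>
    intro t x
    have hle : r t x (π t x) + ∑ x' : E, K t (π t x) x x' * policyVal K r rT π n (t + 1) x'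
        ≤ r t x (π t x) + ∑ x' : E, K t (π t x) x x' * bellmanVal K r rT n (t + 1) x' := by
      gcongr with x' _
      · exact hK0 t _ x x'
      · exact ih (t + 1) x'
    refine hle.trans ?_
    have h2 := le_ciSup (f := fun a : A => r t x a + ∑ x' : E, K t a x x' * bellmanVal K r rT n (t + 1) x') (Finite.bddAbove_range _) (π t x)
    exact h2
end

section
/- Matrix representation of the subgradient envelope of a sum: let F₁, F₂ be real matrices with d columns (with m₁ and m₂ rows respectively, m₁, m₂ ≥ 1) and let G = (g¹,…,g^k) be a grid in ℝ^d. Then the function z ↦ max_{1≤i≤k} ⟨(Υ_G F₁)_i + (Υ_G F₂)_i, z⟩, i.e. f_{Υ_G F₁ + Υ_G F₂}, satisfies f_{Υ_G F₁ + Υ_G F₂}(z) ≤ f_{F₁}(z) + f_{F₂}(z) for all z ∈ ℝ^d, with equality f_{Υ_G F₁ + Υ_G F₂}(gⁱ) = f_{F₁}(gⁱ) + f_{F₂}(gⁱ) at every grid point gⁱ. -/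
open Matrix

/-- The piecewise linear convex function `f_F(z) = max_{1 ≤ i ≤ m} ⟨F_i, z⟩` determined by the
rows of a matrix `F` (maximum of the dot products of the rows with `z`). -/
noncomputable def pwl {m d : ℕ} (F : Matrix (Fin m) (Fin d) ℝ) (z : Fin d → ℝ) : ℝ :=
  ⨆ i : Fin m, F i ⬝ᵥ z

/-- The least row index of `F` attaining `max_j ⟨F_j, g⟩`. -/
noncomputable def argmaxRow {m d : ℕ} [NeZero m] (F : Matrix (Fin m) (Fin d) ℝ)
    (g : Fin d → ℝ) : Fin m :=
  (Finset.univ.filter fun j => ∀ j' : Fin m, F j' ⬝ᵥ g ≤ F j ⬝ᵥ g).min' (by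
    obtain ⟨j, -, hj⟩ :=
      Finset.exists_max_image (Finset.univ : Finset (Fin m)) (fun j => F j ⬝ᵥ g)
        Finset.univ_nonempty
    refine ⟨j, ?_⟩
    simp only [Finset.mem_filter, Finset.mem_univ, true_and]
    exact fun j' => hj j' (Finset.mem_univ _))

/-- The row-rearrangement operator `Υ_G`: the `i`-th row of `Υ_G F` is the row of `F` of least
index attaining `max_j ⟨F_j, gⁱ⟩`. -/
noncomputable def rearrange {m d k : ℕ} [NeZero m] (F : Matrix (Fin m) (Fin d) ℝ)
    (G : Fin k → Fin d → ℝ) : Matrix (Fin k) (Fin d) ℝ :=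
  fun i => F (argmaxRow F (G i))


lemma argmaxRow_spec {m d : ℕ} [NeZero m] (F : Matrix (Fin m) (Fin d) ℝ) (g : Fin d → ℝ)
    (j : Fin m) : F j ⬝ᵥ g ≤ F (argmaxRow F g) ⬝ᵥ g := by
  unfold argmaxRow
  have h := Finset.min'_mem
    (Finset.univ.filter fun j => ∀ j' : Fin m, F j' ⬝ᵥ g ≤ F j ⬝ᵥ g) (by
      obtain ⟨j, -, hj⟩ :=
        Finset.exists_max_image (Finset.univ : Finset (Fin m)) (fun j => F j ⬝ᵥ g)
          Finset.univ_nonempty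
      refine ⟨j, ?_⟩
      simp only [Finset.mem_filter, Finset.mem_univ, true_and]
      exact fun j' => hj j' (Finset.mem_univ _))
  rw [Finset.mem_filter] at h
  exact h.2 j

lemma le_pwl {m d : ℕ} (F : Matrix (Fin m) (Fin d) ℝ) (z : Fin d → ℝ) (i : Fin m) :
    F i ⬝ᵥ z ≤ pwl F z := by
  unfold pwl
  exact le_ciSup (f := fun i => F i ⬝ᵥ z) (Set.Finite.bddAbove (Set.finite_range _)) i

lemma pwl_eq_argmax {m d : ℕ} [NeZero m] (F : Matrix (Fin m) (Fin d) ℝ) (g : Fin d → ℝ) :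
    pwl F g = F (argmaxRow F g) ⬝ᵥ g :=
  le_antisymm (ciSup_le (argmaxRow_spec F g)) (le_pwl F g _)

lemma add_row_dot {m d : ℕ} (A B : Matrix (Fin m) (Fin d) ℝ) (j : Fin m) (z : Fin d → ℝ) :
    (A + B) j ⬝ᵥ z = A j ⬝ᵥ z + B j ⬝ᵥ z := by
  have : (A + B) j = A j + B j := rfl
  rw [this, add_dotProduct]

/-- Matrix representation of the subgradient envelope of a sum:
`f_{Υ_G F₁ + Υ_G F₂} ≤ f_{F₁} + f_{F₂}` everywhere, with equality at every grid point. -/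
theorem rearrange_sum_le_and_eq_on_grid {m₁ m₂ d k : ℕ} [NeZero m₁] [NeZero m₂] [NeZero k]
    (F₁ : Matrix (Fin m₁) (Fin d) ℝ) (F₂ : Matrix (Fin m₂) (Fin d) ℝ)
    (G : Fin k → Fin d → ℝ) :
    (∀ z : Fin d → ℝ, pwl (rearrange F₁ G + rearrange F₂ G) z ≤ pwl F₁ z + pwl F₂ z) ∧
      ∀ i : Fin k, pwl (rearrange F₁ G + rearrange F₂ G) (G i) = pwl F₁ (G i) + pwl F₂ (G i) := by
  constructor
  · intro z
    refine ciSup_le fun i => ?_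
    rw [add_row_dot]
    exact add_le_add (le_pwl F₁ z _) (le_pwl F₂ z _)
  · intro i
    refine le_antisymm (ciSup_le fun j => ?_) ?_
    · rw [add_row_dot]
      exact add_le_add (le_pwl F₁ _ _) (le_pwl F₂ _ _)
    · have h : (rearrange F₁ G + rearrange F₂ G) i ⬝ᵥ G i
          = pwl F₁ (G i) + pwl F₂ (G i) := by
        rw [add_row_dot, pwl_eq_argmax F₁ (G i), pwl_eq_argmax F₂ (G i)]; rfl
      rw [← h]
      exact le_pwl _ _ i
end

section
/- The sampled (modified) Bellman operator preserves piecewise linear convexity: let P and A be finite nonempty sets, let (α^a_{p,p'}) be nonnegative reals, let ν(1),…,ν(N) be nonnegative weights, let W(1),…,W(N) be d×d real matrices, and for each p ∈ P, a ∈ A and p' ∈ P let R(p,a) and V(p') be real matrices with d columns. Then for each p ∈ P the function z ↦ max_{a∈A} ( f_{R(p,a)}(z) + Σ_{n=1}^{N} ν(n) Σ_{p'∈P} α^a_{p,p'} f_{V(p')}(W(n) z) ) equals f_{F} for some real matrix F with d columns; in particular it is convex and is a maximum of finitely many linear functionals of z. -/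
open Matrix Finset

/-- f is a finite max of linear functionals. -/
def IsMaxLin {d : ℕ} (f : (Fin d → ℝ) → ℝ) : Prop :=
  ∃ (ι : Type) (_ : Fintype ι) (_ : Nonempty ι) (g : ι → Fin d → ℝ),
    ∀ z, f z = ⨆ i, g i ⬝ᵥ z

lemma iSup_eq_sup' {ι : Type*} [Fintype ι] [Nonempty ι] (f : ι → ℝ) :
    (⨆ i, f i) = univ.sup' univ_nonempty f := (Finset.sup'_univ_eq_ciSup f).symm

lemma fsup_add_fsup {ι κ : Type*} [Fintype ι] [Nonempty ι] [Fintype κ] [Nonempty κ]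
    (f : ι → ℝ) (g : κ → ℝ) :
    (⨆ i, f i) + (⨆ j, g j) = ⨆ x : ι × κ, (f x.1 + g x.2) := by
  rw [iSup_eq_sup', iSup_eq_sup', iSup_eq_sup']
  obtain ⟨i0, -, hi0⟩ := Finset.exists_mem_eq_sup' (univ_nonempty (α := ι)) f
  obtain ⟨j0, -, hj0⟩ := Finset.exists_mem_eq_sup' (univ_nonempty (α := κ)) g
  apply le_antisymm
  · rw [hi0, hj0]
    exact Finset.le_sup' (fun x : ι × κ => f x.1 + g x.2) (mem_univ (i0, j0))
  · apply Finset.sup'_le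
    intro x _
    exact add_le_add (Finset.le_sup' f (mem_univ x.1)) (Finset.le_sup' g (mem_univ x.2))

lemma const_mul_fsup {ι : Type*} [Fintype ι] [Nonempty ι] (c : ℝ) (hc : 0 ≤ c) (f : ι → ℝ) :
    c * (⨆ i, f i) = ⨆ i, c * f i := by
  rw [iSup_eq_sup', iSup_eq_sup']
  exact Finset.comp_sup'_eq_sup'_comp _ (c * ·) (fun x y => mul_max_of_nonneg x y hc)

lemma isMaxLin_pwl {m d : ℕ} (hm : 0 < m) (F : Matrix (Fin m) (Fin d) ℝ) :
    IsMaxLin (pwl F) := by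
  have : Nonempty (Fin m) := ⟨⟨0, hm⟩⟩
  exact ⟨Fin m, inferInstance, this, F, fun z => rfl⟩

lemma IsMaxLin.comp {d : ℕ} {f : (Fin d → ℝ) → ℝ} (hf : IsMaxLin f)
    (W : Matrix (Fin d) (Fin d) ℝ) : IsMaxLin (fun z => f (W *ᵥ z)) := by
  obtain ⟨ι, _, _, g, hg⟩ := hf
  refine ⟨ι, inferInstance, inferInstance, fun i => g i ᵥ* W, fun z => ?_⟩
  show f (W *ᵥ z) = _
  rw [hg]
  simp [dotProduct_mulVec]

lemma IsMaxLin.smul {d : ℕ} {f : (Fin d → ℝ) → ℝ} (hf : IsMaxLin f)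
    {c : ℝ} (hc : 0 ≤ c) : IsMaxLin (fun z => c * f z) := by
  obtain ⟨ι, _, _, g, hg⟩ := hf
  refine ⟨ι, inferInstance, inferInstance, fun i => c • g i, fun z => ?_⟩
  show c * f z = _
  rw [hg, const_mul_fsup c hc]
  simp [smul_dotProduct]

lemma IsMaxLin.add {d : ℕ} {f g : (Fin d → ℝ) → ℝ} (hf : IsMaxLin f) (hg : IsMaxLin g) :
    IsMaxLin (fun z => f z + g z) := by
  obtain ⟨ι, _, _, u, hu⟩ := hf
  obtain ⟨κ, _, _, v, hv⟩ := hg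
  refine ⟨ι × κ, inferInstance, inferInstance, fun x => u x.1 + v x.2, fun z => ?_⟩
  show f z + g z = _
  rw [hu, hv, fsup_add_fsup]
  simp [add_dotProduct]

lemma IsMaxLin.sum {d : ℕ} {κ : Type*} (s : Finset κ) {f : κ → (Fin d → ℝ) → ℝ}
    (hf : ∀ k ∈ s, IsMaxLin (f k)) : IsMaxLin (fun z => ∑ k ∈ s, f k z) := by
  induction s using Finset.cons_induction with
  | empty =>
    refine ⟨Unit, inferInstance, inferInstance, fun _ => 0, fun z => ?_⟩
    simp
  | cons a s ha ih =>
    simp only [Finset.sum_cons]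
    exact (hf a (Finset.mem_cons_self a s)).add
      (ih (fun k hk => hf k (Finset.mem_cons_of_mem hk)))

lemma fsup_sigma {κ : Type*} [Fintype κ] [Nonempty κ] {ι : κ → Type} [∀ k, Fintype (ι k)]
    [∀ k, Nonempty (ι k)] (h : (k : κ) → ι k → ℝ) :
    (⨆ k, ⨆ i, h k i) = ⨆ x : (k : κ) × ι k, h x.1 x.2 := by
  haveI : Nonempty ((k : κ) × ι k) := ⟨⟨Classical.arbitrary _, Classical.arbitrary _⟩⟩
  apply le_antisymm
  · apply ciSup_le; intro k
    apply ciSup_le; intro i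
    exact le_ciSup (f := fun x : (k : κ) × ι k => h x.1 x.2)
      (Set.Finite.bddAbove (Set.finite_range _)) ⟨k, i⟩
  · apply ciSup_le; intro x
    calc h x.1 x.2 ≤ ⨆ i, h x.1 i :=
          le_ciSup (Set.Finite.bddAbove (Set.finite_range _)) x.2
      _ ≤ ⨆ k, ⨆ i, h k i :=
          le_ciSup (f := fun k => ⨆ i, h k i) (Set.Finite.bddAbove (Set.finite_range _)) x.1

lemma IsMaxLin.isup {d : ℕ} {κ : Type*} [Fintype κ] [Nonempty κ]
    {f : κ → (Fin d → ℝ) → ℝ} (hf : ∀ k, IsMaxLin (f k)) :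
    IsMaxLin (fun z => ⨆ k, f k z) := by
  have e := Fintype.equivFin κ
  have hre : ∀ z, (⨆ k, f k z) = ⨆ j : Fin (Fintype.card κ), f (e.symm j) z := by
    intro z
    exact (Equiv.iSup_congr e.symm (fun j => rfl)).symm
  choose ι inst ne g hg using fun j : Fin (Fintype.card κ) => hf (e.symm j)
  haveI := inst
  haveI := ne
  haveI : Nonempty (Fin (Fintype.card κ)) := ⟨e (Classical.arbitrary κ)⟩
  refine ⟨(j : Fin (Fintype.card κ)) × ι j, inferInstance,
    ⟨⟨Classical.arbitrary _, Classical.arbitrary _⟩⟩,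
    fun x => g x.1 x.2, fun z => ?_⟩
  simp only [hre, hg]
  exact fsup_sigma (fun j i => g j i ⬝ᵥ z)

lemma IsMaxLin.convex {d : ℕ} {f : (Fin d → ℝ) → ℝ} (hf : IsMaxLin f) :
    ConvexOn ℝ Set.univ f := by
  obtain ⟨ι, _, _, g, hg⟩ := hf
  refine ⟨convex_univ, fun x _ y _ a b ha hb hab => ?_⟩
  rw [hg, hg, hg, iSup_eq_sup']
  apply Finset.sup'_le
  intro i _
  have : g i ⬝ᵥ (a • x + b • y) = a * (g i ⬝ᵥ x) + b * (g i ⬝ᵥ y) := by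
    simp [dotProduct_add, dotProduct_smul, smul_eq_mul]
  rw [this]
  have hx : g i ⬝ᵥ x ≤ ⨆ j, g j ⬝ᵥ x :=
    le_ciSup (f := fun j => g j ⬝ᵥ x) (Set.Finite.bddAbove (Set.finite_range _)) i
  have hy : g i ⬝ᵥ y ≤ ⨆ j, g j ⬝ᵥ y :=
    le_ciSup (f := fun j => g j ⬝ᵥ y) (Set.Finite.bddAbove (Set.finite_range _)) i
  rw [smul_eq_mul, smul_eq_mul]
  exact add_le_add (mul_le_mul_of_nonneg_left hx ha) (mul_le_mul_of_nonneg_left hy hb)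

lemma IsMaxLin.toPwl {d : ℕ} {f : (Fin d → ℝ) → ℝ} (hf : IsMaxLin f) :
    ∃ (m : ℕ) (F : Matrix (Fin m) (Fin d) ℝ), 0 < m ∧ ∀ z, f z = pwl F z := by
  obtain ⟨ι, _, _, g, hg⟩ := hf
  refine ⟨Fintype.card ι, fun i => g ((Fintype.equivFin ι).symm i), Fintype.card_pos, fun z => ?_⟩
  rw [hg]
  delta pwl
  exact (Equiv.iSup_congr (Fintype.equivFin ι).symm (fun i => rfl)).symm

/-- The sampled (modified) Bellman operator preserves piecewise linear convexity: for finite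
nonempty `P`, `A`, nonnegative `α^a_{p,p'}`, nonnegative weights `ν(1),…,ν(N)`, matrices
`W(1),…,W(N)` and matrix representatives `R(p,a)`, `V(p')` (with `d` columns and at least one
row each), for each `p` the function
`z ↦ max_{a} ( f_{R(p,a)}(z) + Σ_n ν(n) Σ_{p'} α^a_{p,p'} f_{V(p')}(W(n) z) )`
equals `f_F` for some matrix `F` with `d` columns and at least one row; in particular it is
convex and is a maximum of finitely many linear functionals. -/
theorem sampled_bellman_pwl {d N : ℕ} {P A : Type*}
    [Fintype P] [Nonempty P] [Fintype A] [Nonempty A]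
    (α : A → P → P → ℝ) (hα : ∀ a p p', 0 ≤ α a p p')
    (ν : Fin N → ℝ) (hν : ∀ n, 0 ≤ ν n)
    (W : Fin N → Matrix (Fin d) (Fin d) ℝ)
    (mR : P → A → ℕ) (hmR : ∀ p a, 0 < mR p a)
    (mV : P → ℕ) (hmV : ∀ p', 0 < mV p')
    (R : (p : P) → (a : A) → Matrix (Fin (mR p a)) (Fin d) ℝ)
    (V : (p' : P) → Matrix (Fin (mV p')) (Fin d) ℝ) (p : P) :
    ∃ (m : ℕ) (F : Matrix (Fin m) (Fin d) ℝ), 0 < m ∧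
      (∀ z : Fin d → ℝ,
        (⨆ a : A, (pwl (R p a) z +
          ∑ n : Fin N, ν n * ∑ p' : P, α a p p' * pwl (V p') (W n *ᵥ z))) = pwl F z) ∧
      ConvexOn ℝ Set.univ (fun z : Fin d → ℝ =>
        ⨆ a : A, (pwl (R p a) z +
          ∑ n : Fin N, ν n * ∑ p' : P, α a p p' * pwl (V p') (W n *ᵥ z))) := by
  have key : IsMaxLin (fun z : Fin d → ℝ =>
      ⨆ a : A, (pwl (R p a) z +
        ∑ n : Fin N, ν n * ∑ p' : P, α a p p' * pwl (V p') (W n *ᵥ z))) := by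
    apply IsMaxLin.isup
    intro a
    apply (isMaxLin_pwl (hmR p a) (R p a)).add
    apply IsMaxLin.sum
    intro n _
    apply IsMaxLin.smul _ (hν n)
    apply IsMaxLin.sum
    intro p' _
    exact (((isMaxLin_pwl (hmV p') (V p')).comp (W n))).smul (hα a p p')
  obtain ⟨m, F, hm, hF⟩ := key.toPwl
  exact ⟨m, F, hm, hF, key.convex⟩
end
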